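/- The invariant Q(K₁,K₂) is unchanged if the line element on a circle is moved along that circle: if (x₁',y₁',τ₁') is obtained from (x₁,y₁,τ₁) by moving along the circle of curvature k₁ (i.e., x₁' = x₁ + (sin(τ₁+t) − sin τ₁)/k₁, y₁' = y₁ − (cos(τ₁+t) − cos τ₁)/k₁, τ₁' = τ₁ + t for k₁ ≠ 0), then Q((x₁',y₁',τ₁',k₁), K₂) = Q((x₁,y₁,τ₁,k₁), K₂). -/

import Mathlib

open Real

/-- The inversive invariant `Q` of a pair of curvature elements. -/
noncomputable def Q (x₁ y₁ τ₁ k₁ x₂ y₂ τ₂ k₂ : ℝ) : ℝ :=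
  (1/4) * k₁ * k₂ * ((x₂ - x₁)^2 + (y₂ - y₁)^2) + Real.sin ((τ₂ - τ₁)/2)^2
    + (1/2) * k₂ * ((x₂ - x₁) * Real.sin τ₁ - (y₂ - y₁) * Real.cos τ₁)
    - (1/2) * k₁ * ((x₂ - x₁) * Real.sin τ₂ - (y₂ - y₁) * Real.cos τ₂)

/-- `Q` is unchanged when the line element of the first circle is moved along
that circle (curvature `k₁ ≠ 0`, moving by tangent-angle increment `t`). -/
theorem Q_move_along_circle (x₁ y₁ τ₁ k₁ x₂ y₂ τ₂ k₂ t : ℝ) (hk₁ : k₁ ≠ 0) :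
    Q (x₁ + (Real.sin (τ₁ + t) - Real.sin τ₁) / k₁)
      (y₁ - (Real.cos (τ₁ + t) - Real.cos τ₁) / k₁)
      (τ₁ + t) k₁ x₂ y₂ τ₂ k₂ = Q x₁ y₁ τ₁ k₁ x₂ y₂ τ₂ k₂ := by
  have h1 : ∀ a : ℝ, Real.sin (a/2)^2 = (1 - Real.cos a)/2 := by
    intro a
    rw [Real.sin_sq_eq_half_sub]
    rw [show 2*(a/2) = a by ring]
    ring
  simp only [Q, h1]
  have hs := Real.sin_sq_add_cos_sq (τ₁ + t)
  have hs1 := Real.sin_sq_add_cos_sq τ₁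
  field_simp
  simp only [show τ₂ - (τ₁ + t) = τ₂ - τ₁ - t by ring, Real.cos_sub, Real.sin_sub,
    Real.sin_add, Real.cos_add]
  linear_combination (-2*k₂*(Real.sin τ₁^2+Real.cos τ₁^2)) * Real.sin_sq_add_cos_sq t
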